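/- For integers n, m ≥ 1 and κ ≥ 3, the real vector space spanned by the vector fields on ℝ^n × ℝ^m given by ∂/∂x_{k₁}, x_{k₁}∂/∂x_{k₂}, x_{k₁}(Σ_l x_l∂/∂x_l + (κ-1)Σ_j u^j∂/∂u^j), u^{i₁}∂/∂u^{i₂}, and x^β∂/∂u^{i} for all multi-indices β with |β| ≤ κ-1, is closed under the Lie bracket of vector fields. -/

import Mathlib

/-- Lie bracket of vector fields on `ℝ^n × ℝ^m`. -/
noncomputable def vbracket {n m : ℕ}
    (V W : (Fin n → ℝ) × (Fin m → ℝ) → (Fin n → ℝ) × (Fin m → ℝ)) :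
    (Fin n → ℝ) × (Fin m → ℝ) → (Fin n → ℝ) × (Fin m → ℝ) :=
  fun p => fderiv ℝ W p (V p) - fderiv ℝ V p (W p)

/-- The generators (e48): `∂/∂x_{k₁}`, `x_{k₁}∂/∂x_{k₂}`,
`x_{k₁}(Σ_l x_l∂/∂x_l + (κ-1)Σ_j u^j∂/∂u^j)`, `u^{i₁}∂/∂u^{i₂}`, `x^β∂/∂u^i` (|β| ≤ κ-1). -/
def genSet (n m κ : ℕ) :
    Set ((Fin n → ℝ) × (Fin m → ℝ) → (Fin n → ℝ) × (Fin m → ℝ)) :=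
  {V | ∃ k : Fin n, V = fun _ => (Pi.single k 1, 0)} ∪
  {V | ∃ k₁ k₂ : Fin n, V = fun p => (Pi.single k₂ (p.1 k₁), 0)} ∪
  {V | ∃ k₁ : Fin n, V = fun p =>
        (fun l => p.1 k₁ * p.1 l, fun j => ((κ : ℝ) - 1) * p.1 k₁ * p.2 j)} ∪
  {V | ∃ i₁ i₂ : Fin m, V = fun p => (0, Pi.single i₂ (p.2 i₁))} ∪
  {V | ∃ (i : Fin m) (β : Fin n → ℕ), (∑ k, β k) ≤ κ - 1 ∧
        V = fun p => (0, Pi.single i (∏ k, p.1 k ^ β k))}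

open Finset

section Aux

abbrev EV (n m : ℕ) := (Fin n → ℝ) × (Fin m → ℝ)

variable {n m κ : ℕ}

noncomputable def cx (k : Fin n) : EV n m →L[ℝ] ℝ :=
  (ContinuousLinearMap.proj k).comp (ContinuousLinearMap.fst ℝ (Fin n → ℝ) (Fin m → ℝ))

noncomputable def cu (i : Fin m) : EV n m →L[ℝ] ℝ :=
  (ContinuousLinearMap.proj i).comp (ContinuousLinearMap.snd ℝ (Fin n → ℝ) (Fin m → ℝ))

@[simp] lemma cx_apply (k : Fin n) (v : EV n m) : cx k v = v.1 k := rfl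
@[simp] lemma cu_apply (i : Fin m) (v : EV n m) : cu i v = v.2 i := rfl

lemma hasFDerivAt_cx (k : Fin n) (p : EV n m) :
    HasFDerivAt (fun q : EV n m => q.1 k) (cx k) p := (cx k).hasFDerivAt

lemma hasFDerivAt_cu (i : Fin m) (p : EV n m) :
    HasFDerivAt (fun q : EV n m => q.2 i) (cu i) p := (cu i).hasFDerivAt

/-! ### The generators -/

def genA (k : Fin n) : EV n m → EV n m := fun _ => (Pi.single k 1, 0)
def genB (k₁ k₂ : Fin n) : EV n m → EV n m := fun p => (Pi.single k₂ (p.1 k₁), 0)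
def genC (κ : ℕ) (k₁ : Fin n) : EV n m → EV n m :=
  fun p => (fun l => p.1 k₁ * p.1 l, fun j => ((κ : ℝ) - 1) * p.1 k₁ * p.2 j)
def genD (i₁ i₂ : Fin m) : EV n m → EV n m := fun p => (0, Pi.single i₂ (p.2 i₁))
def genE (i : Fin m) (β : Fin n → ℕ) : EV n m → EV n m :=
  fun p => (0, Pi.single i (∏ k, p.1 k ^ β k))

/-! ### Derivatives of the generators -/

lemma genB_eq (k₁ k₂ : Fin n) :
    (genB k₁ k₂ : EV n m → EV n m) =
      fun p => p.1 k₁ • ((Pi.single k₂ 1, 0) : EV n m) := by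
  funext p
  refine Prod.ext ?_ (by simp [genB])
  funext l
  simp [genB, Pi.single_apply]

lemma hasFDerivAt_genB (k₁ k₂ : Fin n) (p : EV n m) :
    HasFDerivAt (genB k₁ k₂)
      ((cx k₁).smulRight (((Pi.single k₂ 1, 0) : EV n m))) p := by
  rw [genB_eq]
  exact (hasFDerivAt_cx k₁ p).smul_const _

lemma genD_eq (i₁ i₂ : Fin m) :
    (genD i₁ i₂ : EV n m → EV n m) =
      fun p => p.2 i₁ • ((0, Pi.single i₂ 1) : EV n m) := by
  funext p
  refine Prod.ext (by simp [genD]) ?_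
  funext j
  simp [genD, Pi.single_apply]

lemma hasFDerivAt_genD (i₁ i₂ : Fin m) (p : EV n m) :
    HasFDerivAt (genD i₁ i₂)
      ((cu i₁).smulRight (((0, Pi.single i₂ 1) : EV n m))) p := by
  rw [genD_eq]
  exact (hasFDerivAt_cu i₁ p).smul_const _

noncomputable def GG (n m κ : ℕ) : EV n m →L[ℝ] EV n m :=
  (ContinuousLinearMap.fst ℝ (Fin n → ℝ) (Fin m → ℝ)).prod
    (((κ : ℝ) - 1) • ContinuousLinearMap.snd ℝ (Fin n → ℝ) (Fin m → ℝ))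

@[simp] lemma GG_apply (v : EV n m) : GG n m κ v = (v.1, ((κ : ℝ) - 1) • v.2) := rfl

lemma genC_eq (κ : ℕ) (k₁ : Fin n) :
    (genC κ k₁ : EV n m → EV n m) = fun p => p.1 k₁ • (GG n m κ) p := by
  funext p
  refine Prod.ext ?_ ?_ <;> funext l <;>
    simp [genC, GG, Pi.smul_apply, smul_eq_mul] <;> ring

lemma hasFDerivAt_genC (κ : ℕ) (k₁ : Fin n) (p : EV n m) :
    HasFDerivAt (genC κ k₁)
      (p.1 k₁ • (GG n m κ : EV n m →L[ℝ] EV n m) + (cx k₁).smulRight (GG n m κ p)) p := by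
  rw [genC_eq]
  exact (hasFDerivAt_cx k₁ p).smul ((GG n m κ).hasFDerivAt)

lemma genE_eq (i : Fin m) (β : Fin n → ℕ) :
    (genE i β : EV n m → EV n m) =
      fun p => (∏ k, p.1 k ^ β k) • ((0, Pi.single i 1) : EV n m) := by
  funext p
  refine Prod.ext (by simp [genE]) ?_
  funext j
  simp [genE, Pi.single_apply]

lemma hasFDerivAt_pow_cx (k : Fin n) (b : ℕ) (p : EV n m) :
    HasFDerivAt (fun q : EV n m => q.1 k ^ b)
      (((b : ℝ) * p.1 k ^ (b - 1)) • (cx k : EV n m →L[ℝ] ℝ)) p :=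
  (hasDerivAt_pow b (p.1 k)).comp_hasFDerivAt p (hasFDerivAt_cx k p)

lemma hasFDerivAt_mono (β : Fin n → ℕ) (p : EV n m) :
    HasFDerivAt (fun q : EV n m => ∏ k, q.1 k ^ β k)
      (∑ k, (∏ l ∈ Finset.univ.erase k, p.1 l ^ β l) •
        (((β k : ℝ) * p.1 k ^ (β k - 1)) • (cx k : EV n m →L[ℝ] ℝ))) p :=
  HasFDerivAt.finset_prod (fun k _ => hasFDerivAt_pow_cx k (β k) p)

lemma hasFDerivAt_genE (i : Fin m) (β : Fin n → ℕ) (p : EV n m) :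
    HasFDerivAt (genE i β)
      ((∑ k, (∏ l ∈ Finset.univ.erase k, p.1 l ^ β l) •
        (((β k : ℝ) * p.1 k ^ (β k - 1)) • (cx k : EV n m →L[ℝ] ℝ))).smulRight
        (((0, Pi.single i 1) : EV n m))) p := by
  rw [genE_eq]
  exact (hasFDerivAt_mono β p).smul_const _

lemma fderiv_genA (k : Fin n) (p v : EV n m) :
    fderiv ℝ (genA k : EV n m → EV n m) p v = 0 := by
  rw [show (genA k : EV n m → EV n m) = fun _ => ((Pi.single k 1 : Fin n → ℝ), (0 : Fin m → ℝ)) from rfl,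
    (hasFDerivAt_const _ p).fderiv]
  simp

lemma fderiv_genB (k₁ k₂ : Fin n) (p v : EV n m) :
    fderiv ℝ (genB k₁ k₂ : EV n m → EV n m) p v = (Pi.single k₂ (v.1 k₁), 0) := by
  rw [(hasFDerivAt_genB k₁ k₂ p).fderiv]
  refine Prod.ext ?_ (by simp)
  funext l
  simp [Pi.single_apply]

lemma fderiv_genD (i₁ i₂ : Fin m) (p v : EV n m) :
    fderiv ℝ (genD i₁ i₂ : EV n m → EV n m) p v = (0, Pi.single i₂ (v.2 i₁)) := by
  rw [(hasFDerivAt_genD i₁ i₂ p).fderiv]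
  refine Prod.ext (by simp) ?_
  funext j
  simp [Pi.single_apply]

lemma fderiv_genC (κ : ℕ) (k₁ : Fin n) (p v : EV n m) :
    fderiv ℝ (genC κ k₁ : EV n m → EV n m) p v =
      (fun l => p.1 k₁ * v.1 l + v.1 k₁ * p.1 l,
       fun j => ((κ : ℝ) - 1) * (p.1 k₁ * v.2 j + v.1 k₁ * p.2 j)) := by
  rw [(hasFDerivAt_genC κ k₁ p).fderiv]
  refine Prod.ext ?_ ?_ <;> funext l <;>
    simp [Pi.smul_apply, smul_eq_mul] <;> ring

lemma fderiv_genE (i : Fin m) (β : Fin n → ℕ) (p v : EV n m) :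
    fderiv ℝ (genE i β : EV n m → EV n m) p v =
      (0, Pi.single i (∑ k, (∏ l ∈ Finset.univ.erase k, p.1 l ^ β l) *
        ((β k : ℝ) * p.1 k ^ (β k - 1) * v.1 k))) := by
  rw [(hasFDerivAt_genE i β p).fderiv]
  refine Prod.ext (by simp) ?_
  funext j
  simp [Pi.single_apply, mul_assoc, Finset.sum_apply]

lemma diff_genA (k : Fin n) : Differentiable ℝ (genA k : EV n m → EV n m) :=
  fun p => (hasFDerivAt_const _ p).differentiableAt
lemma diff_genB (k₁ k₂ : Fin n) : Differentiable ℝ (genB k₁ k₂ : EV n m → EV n m) :=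
  fun p => (hasFDerivAt_genB k₁ k₂ p).differentiableAt
lemma diff_genC (κ : ℕ) (k₁ : Fin n) : Differentiable ℝ (genC κ k₁ : EV n m → EV n m) :=
  fun p => (hasFDerivAt_genC κ k₁ p).differentiableAt
lemma diff_genD (i₁ i₂ : Fin m) : Differentiable ℝ (genD i₁ i₂ : EV n m → EV n m) :=
  fun p => (hasFDerivAt_genD i₁ i₂ p).differentiableAt
lemma diff_genE (i : Fin m) (β : Fin n → ℕ) : Differentiable ℝ (genE i β : EV n m → EV n m) :=
  fun p => (hasFDerivAt_genE i β p).differentiableAt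

/-! ### Membership of the generators in the span -/

abbrev SP (n m κ : ℕ) := Submodule.span ℝ (genSet n m κ)

lemma memA (k : Fin n) : (genA k : EV n m → EV n m) ∈ SP n m κ :=
  Submodule.subset_span (Or.inl (Or.inl (Or.inl (Or.inl ⟨k, rfl⟩))))
lemma memB (k₁ k₂ : Fin n) : (genB k₁ k₂ : EV n m → EV n m) ∈ SP n m κ :=
  Submodule.subset_span (Or.inl (Or.inl (Or.inl (Or.inr ⟨k₁, k₂, rfl⟩))))
lemma memC (k₁ : Fin n) : (genC κ k₁ : EV n m → EV n m) ∈ SP n m κ :=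
  Submodule.subset_span (Or.inl (Or.inl (Or.inr ⟨k₁, rfl⟩)))
lemma memD (i₁ i₂ : Fin m) : (genD i₁ i₂ : EV n m → EV n m) ∈ SP n m κ :=
  Submodule.subset_span (Or.inl (Or.inr ⟨i₁, i₂, rfl⟩))
lemma memE (i : Fin m) (β : Fin n → ℕ) (hβ : (∑ k, β k) ≤ κ - 1) :
    (genE i β : EV n m → EV n m) ∈ SP n m κ :=
  Submodule.subset_span (Or.inr ⟨i, β, hβ, rfl⟩)

def genR (n m κ : ℕ) : EV n m → EV n m :=
  fun p => (p.1, fun j => ((κ : ℝ) - 1) * p.2 j)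

lemma genR_eq : genR n m κ = (∑ l, genB l l) + ((κ : ℝ) - 1) • ∑ j, genD j j := by
  have hB : ∀ p : EV n m, (∑ l, (genB l l : EV n m → EV n m)) p = (p.1, 0) := by
    intro p
    rw [Finset.sum_apply]
    refine Prod.ext ?_ ?_
    · rw [Prod.fst_sum]
      simpa [genB] using Finset.univ_sum_single p.1
    · rw [Prod.snd_sum]
      simp [genB]
  have hD : ∀ p : EV n m, (∑ j, (genD j j : EV n m → EV n m)) p = (0, p.2) := by
    intro p
    rw [Finset.sum_apply]
    refine Prod.ext ?_ ?_
    · rw [Prod.fst_sum]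
      simp [genD]
    · rw [Prod.snd_sum]
      simpa [genD] using Finset.univ_sum_single p.2
  funext p
  rw [Pi.add_apply, Pi.smul_apply, hB p, hD p]
  refine Prod.ext (by simp [genR]) ?_
  funext j
  simp [genR, smul_eq_mul]

lemma memR : genR n m κ ∈ SP n m κ := by
  rw [genR_eq]
  exact add_mem (sum_mem fun l _ => memB l l)
    (Submodule.smul_mem _ _ (sum_mem fun j _ => memD j j))

/-! ### Auxiliary algebraic lemmas -/

lemma prod_update_pow (x : Fin n → ℝ) (β : Fin n → ℕ) (k : Fin n) (c : ℕ) :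
    ∏ l, x l ^ (Function.update β k c l) = x k ^ c * ∏ l ∈ Finset.univ.erase k, x l ^ β l := by
  rw [← Finset.mul_prod_erase Finset.univ _ (Finset.mem_univ k)]
  congr 1
  · rw [Function.update_self]
  · exact Finset.prod_congr rfl fun l hl => by
      rw [Function.update_of_ne (Finset.ne_of_mem_erase hl)]

lemma prod_addone_pow (x : Fin n → ℝ) (β : Fin n → ℕ) (a : Fin n) :
    ∏ l, x l ^ (β l + (if l = a then 1 else 0)) = x a * ∏ l, x l ^ β l := by
  have h : ∏ l, x l ^ (if l = a then 1 else 0) = x a := by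
    rw [Finset.prod_eq_single a (fun b _ hb => by simp [hb]) (by simp)]
    simp
  simp_rw [pow_add]
  rw [Finset.prod_mul_distrib, h, mul_comm]

lemma term_CE (x : Fin n → ℝ) (β : Fin n → ℕ) (a k : Fin n) :
    (∏ l ∈ Finset.univ.erase k, x l ^ β l) * ((β k : ℝ) * x k ^ (β k - 1) * (x a * x k)) =
      (β k : ℝ) * (x a * ∏ l, x l ^ β l) := by
  rw [← Finset.mul_prod_erase Finset.univ (fun l => x l ^ β l) (Finset.mem_univ k)]
  rcases Nat.eq_zero_or_pos (β k) with h | h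
  · simp [h]
  · have hx : x k ^ (β k - 1) * x k = x k ^ β k := by
      rw [← pow_succ]
      congr 1
      omega
    calc (∏ l ∈ Finset.univ.erase k, x l ^ β l) * ((β k : ℝ) * x k ^ (β k - 1) * (x a * x k))
        = (β k : ℝ) * (x a * ((x k ^ (β k - 1) * x k) * ∏ l ∈ Finset.univ.erase k, x l ^ β l)) := by
          ring
      _ = (β k : ℝ) * (x a * (x k ^ β k * ∏ l ∈ Finset.univ.erase k, x l ^ β l)) := by rw [hx]

/-! ### Brackets of generators -/

lemma brAA (k k' : Fin n) :
    vbracket (genA k : EV n m → EV n m) (genA k') = 0 := by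
  funext p
  simp [vbracket, fderiv_genA]

lemma brAB (k a b : Fin n) :
    vbracket (genA k : EV n m → EV n m) (genB a b) =
      (if a = k then (1 : ℝ) else 0) • genA b := by
  funext p
  simp only [vbracket, fderiv_genB, fderiv_genA, sub_zero]
  by_cases h : a = k <;>
    simp [h, genA, genB, Pi.single_apply, Prod.ext_iff]

lemma brAC (k a : Fin n) :
    vbracket (genA k : EV n m → EV n m) (genC κ a) =
      genB a k + (if a = k then (1 : ℝ) else 0) • genR n m κ := by
  funext p
  simp only [vbracket, fderiv_genC, fderiv_genA, sub_zero]
  by_cases h : a = k <;>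
    · subst_vars
      refine Prod.ext ?_ ?_ <;> funext l <;>
        simp_all [genA, genB, genR, Pi.single_apply] <;> ring

lemma brAD (k : Fin n) (i₁ i₂ : Fin m) :
    vbracket (genA k : EV n m → EV n m) (genD i₁ i₂) = 0 := by
  funext p
  simp [vbracket, fderiv_genD, fderiv_genA, genA, Prod.ext_iff]

lemma brAE (k : Fin n) (i : Fin m) (β : Fin n → ℕ) :
    vbracket (genA k : EV n m → EV n m) (genE i β) =
      (β k : ℝ) • genE i (Function.update β k (β k - 1)) := by
  funext p
  simp only [vbracket, fderiv_genE, fderiv_genA, sub_zero]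
  refine Prod.ext (by simp [genE]) ?_
  funext j
  rcases eq_or_ne j i with rfl | hj
  · simp only [genA, genE, Pi.smul_apply, Prod.snd, Pi.single_eq_same, smul_eq_mul]
    rw [Finset.sum_eq_single_of_mem k (Finset.mem_univ k)
      (fun b _ hbk => by simp [Pi.single_eq_of_ne hbk])]
    rw [prod_update_pow]
    simp
    ring
  · simp [genE, Pi.single_eq_of_ne hj]

lemma brBB (a b c d : Fin n) :
    vbracket (genB a b : EV n m → EV n m) (genB c d) =
      (if c = b then (1 : ℝ) else 0) • genB a d - (if a = d then (1 : ℝ) else 0) • genB c b := by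
  funext p
  simp only [vbracket, fderiv_genB]
  refine Prod.ext ?_ ?_
  · funext l
    by_cases h1 : c = b <;> by_cases h2 : a = d <;>
      simp_all [genB, Pi.single_apply] <;> split <;> simp_all
  · by_cases h1 : c = b <;> by_cases h2 : a = d <;> simp [h1, h2, genB]

lemma brBC (a b k₁ : Fin n) :
    vbracket (genB a b : EV n m → EV n m) (genC κ k₁) =
      (if k₁ = b then (1 : ℝ) else 0) • genC κ a := by
  funext p
  simp only [vbracket, fderiv_genC, fderiv_genB]
  by_cases h : k₁ = b <;>
    refine Prod.ext ?_ ?_ <;> funext l <;>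
      simp_all [genB, genC, Pi.single_apply] <;>
        first
          | rfl
          | ring
          | (split <;> simp_all <;> ring)

lemma brBD (a b : Fin n) (i₁ i₂ : Fin m) :
    vbracket (genB a b : EV n m → EV n m) (genD i₁ i₂) = 0 := by
  funext p
  simp [vbracket, fderiv_genD, fderiv_genB, genB, genD, Prod.ext_iff]

lemma brBE_mem (a b : Fin n) (i : Fin m) (β : Fin n → ℕ) (hβ : (∑ k, β k) ≤ κ - 1) :
    vbracket (genB a b : EV n m → EV n m) (genE i β) ∈ SP n m κ := by
  rcases Nat.eq_zero_or_pos (β b) with h0 | h0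
  · have heq : vbracket (genB a b : EV n m → EV n m) (genE i β) = 0 := by
      funext p
      simp only [vbracket, fderiv_genE, fderiv_genB]
      have h1 : ((genE i β p : EV n m)).1 = 0 := rfl
      refine Prod.ext (by simp [h1]) ?_
      funext j
      rcases eq_or_ne j i with rfl | hj
      · simp only [genB, genE, Pi.single_eq_same, Prod.snd, Pi.sub_apply, Prod.snd_sub]
        rw [Finset.sum_eq_single_of_mem b (Finset.mem_univ b)
          (fun c _ hcb => by simp [Pi.single_eq_of_ne hcb])]
        simp [h0, h1]
      · simp [genE, genB, Pi.single_eq_of_ne hj, h1]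
    rw [heq]; exact zero_mem _
  · set γ : Fin n → ℕ := fun l => Function.update β b (β b - 1) l + (if l = a then 1 else 0)
      with hγ
    have heq : vbracket (genB a b : EV n m → EV n m) (genE i β) = (β b : ℝ) • genE i γ := by
      funext p
      simp only [vbracket, fderiv_genE, fderiv_genB]
      have h1 : ((genE i β p : EV n m)).1 = 0 := rfl
      refine Prod.ext (by simp [h1, genE]) ?_
      funext j
      rcases eq_or_ne j i with rfl | hj
      · simp only [genB, genE, Pi.single_eq_same, Pi.smul_apply, Prod.snd, Prod.snd_sub,
          Pi.sub_apply, smul_eq_mul, h1, Pi.single_eq_same]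
        rw [Finset.sum_eq_single_of_mem b (Finset.mem_univ b)
          (fun c _ hcb => by simp [Pi.single_eq_of_ne hcb])]
        have hprod : ∏ l, p.1 l ^ γ l =
            (p.1 a * (p.1 b ^ (β b - 1) * ∏ l ∈ Finset.univ.erase b, p.1 l ^ β l)) := by
          simp only [hγ]
          rw [prod_addone_pow p.1 (Function.update β b (β b - 1)) a, prod_update_pow]
        rw [hprod]
        simp [Pi.single_eq_same]
        ring
      · simp [genE, genB, Pi.single_eq_of_ne hj, h1]
    rw [heq]
    refine Submodule.smul_mem _ _ (memE i γ ?_)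
    have hsum : ∑ l, γ l = (∑ l, Function.update β b (β b - 1) l) + 1 := by
      rw [hγ]
      rw [Finset.sum_add_distrib]
      congr 1
      simp
    have hupd : ∑ l, Function.update β b (β b - 1) l + 1 = ∑ l, β l := by
      rw [Finset.sum_update_of_mem (Finset.mem_univ b)]
      rw [← Finset.add_sum_erase Finset.univ β (Finset.mem_univ b)]
      simp only [Finset.sdiff_singleton_eq_erase]
      omega
    omega

lemma brCC (a b : Fin n) :
    vbracket (genC κ a : EV n m → EV n m) (genC κ b) = 0 := by
  funext p
  simp only [vbracket, fderiv_genC]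
  refine Prod.ext ?_ ?_ <;> funext l <;> simp [genC] <;> ring

lemma brCD (a : Fin n) (i₁ i₂ : Fin m) :
    vbracket (genC κ a : EV n m → EV n m) (genD i₁ i₂) = 0 := by
  funext p
  simp only [vbracket, fderiv_genC, fderiv_genD]
  refine Prod.ext ?_ ?_ <;> funext l
  · simp [genC, genD]
  · rcases eq_or_ne l i₂ with rfl | hl
    · simp [genC, genD, Pi.single_eq_same]; ring
    · simp [genC, genD, Pi.single_eq_of_ne hl]

lemma brCE_mem (hκ : 3 ≤ κ) (a : Fin n) (i : Fin m) (β : Fin n → ℕ)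
    (hβ : (∑ k, β k) ≤ κ - 1) :
    vbracket (genC κ a : EV n m → EV n m) (genE i β) ∈ SP n m κ := by
  set F : EV n m → EV n m :=
    fun p => ((0 : Fin n → ℝ), Pi.single i (p.1 a * ∏ k, p.1 k ^ β k)) with hF
  have heq : vbracket (genC κ a : EV n m → EV n m) (genE i β) =
      (((∑ k, β k : ℕ) : ℝ) - ((κ : ℝ) - 1)) • F := by
    funext p
    simp only [vbracket, fderiv_genE, fderiv_genC]
    have h1 : ((genE i β p : EV n m)).1 = 0 := rfl
    refine Prod.ext ?_ ?_
    · funext l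
      simp [h1, genC, hF]
    · funext j
      rcases eq_or_ne j i with rfl | hj
      · simp only [genC, genE, Prod.snd, Prod.snd_sub, Pi.sub_apply, Pi.smul_apply,
          Pi.single_eq_same, smul_eq_mul, h1]
        have hterm : ∀ k, (∏ l ∈ Finset.univ.erase k, p.1 l ^ β l) *
            ((β k : ℝ) * p.1 k ^ (β k - 1) * (p.1 a * p.1 k)) =
            (β k : ℝ) * (p.1 a * ∏ l, p.1 l ^ β l) := fun k => term_CE p.1 β a k
        rw [Finset.sum_congr rfl (fun k _ => hterm k), ← Finset.sum_mul]
        push_cast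
        ring_nf
        simp [Pi.zero_apply, hF]
        ring
      · simp [genE, genC, Pi.single_eq_of_ne hj, h1, hF]
  rw [heq]
  by_cases hs : (∑ k, β k) = κ - 1
  · have : (((∑ k, β k : ℕ) : ℝ) - ((κ : ℝ) - 1)) = 0 := by
      rw [hs]
      have : ((κ - 1 : ℕ) : ℝ) = (κ : ℝ) - 1 := by
        have : 1 ≤ κ := by omega
        push_cast [Nat.cast_sub this]
        ring
      rw [this]; ring
    rw [this, zero_smul]
    exact zero_mem _
  · have hlt : (∑ k, β k) + 1 ≤ κ - 1 := by omega
    have hfun : F = genE i (fun l => β l + (if l = a then 1 else 0)) := by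
      rw [hF]
      funext p
      refine Prod.ext rfl ?_
      simp only [genE]
      rw [prod_addone_pow]
    rw [hfun]
    refine Submodule.smul_mem _ _ (memE i _ ?_)
    have : ∑ l, (β l + (if l = a then 1 else 0)) = (∑ l, β l) + 1 := by
      rw [Finset.sum_add_distrib]
      simp
    omega

lemma brDD (a b c d : Fin m) :
    vbracket (genD a b : EV n m → EV n m) (genD c d) =
      (if c = b then (1 : ℝ) else 0) • genD a d - (if a = d then (1 : ℝ) else 0) • genD c b := by
  funext p
  simp only [vbracket, fderiv_genD]
  refine Prod.ext ?_ ?_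
  · by_cases h1 : c = b <;> by_cases h2 : a = d <;> simp [h1, h2, genD]
  · funext l
    by_cases h1 : c = b <;> by_cases h2 : a = d <;>
      simp_all [genD, Pi.single_apply] <;> split <;> simp_all

lemma brDE (a b : Fin m) (i : Fin m) (β : Fin n → ℕ) :
    vbracket (genD a b : EV n m → EV n m) (genE i β) =
      -((if a = i then (1 : ℝ) else 0) • genE b β) := by
  funext p
  simp only [vbracket, fderiv_genE, fderiv_genD]
  have h1 : ((genE i β p : EV n m)).1 = 0 := rfl
  have h2 : ((genD a b p : EV n m)).1 = 0 := rfl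
  by_cases h : a = i
  · subst h
    refine Prod.ext (by simp [h1, h2, genE]) ?_
    funext j
    simp [genD, genE, h1, h2, Pi.single_apply]
  · refine Prod.ext (by simp [h, h1, h2, genE]) ?_
    funext j
    simp [genD, genE, h, h1, h2, Pi.single_apply]

lemma brEE (i i' : Fin m) (β β' : Fin n → ℕ) :
    vbracket (genE i β : EV n m → EV n m) (genE i' β') = 0 := by
  funext p
  have h1 : ((genE i β p : EV n m)).1 = 0 := rfl
  have h1' : ((genE i' β' p : EV n m)).1 = 0 := rfl
  simp [vbracket, fderiv_genE, h1, h1', Prod.ext_iff]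

/-! ### Bracket bilinearity -/

lemma vbracket_antisymm (X Y : EV n m → EV n m) : vbracket X Y = -vbracket Y X :=
  funext fun p => (neg_sub _ _).symm

lemma vbracket_zero_left (Y : EV n m → EV n m) : vbracket 0 Y = 0 := by
  funext p
  have : fderiv ℝ (0 : EV n m → EV n m) p = 0 := by
    rw [show (0 : EV n m → EV n m) = fun _ => (0 : EV n m) from rfl]
    exact (hasFDerivAt_const _ p).fderiv
  simp [vbracket, this]

lemma vbracket_zero_right (X : EV n m → EV n m) : vbracket X 0 = 0 := by
  rw [vbracket_antisymm, vbracket_zero_left, neg_zero]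

lemma vbracket_add_right (X Y Z : EV n m → EV n m)
    (hY : Differentiable ℝ Y) (hZ : Differentiable ℝ Z) :
    vbracket X (Y + Z) = vbracket X Y + vbracket X Z := by
  funext p
  have h1 : fderiv ℝ (Y + Z) p = fderiv ℝ Y p + fderiv ℝ Z p := fderiv_add (hY p) (hZ p)
  simp only [vbracket, Pi.add_apply, h1, ContinuousLinearMap.add_apply, map_add]
  abel

lemma vbracket_smul_right (X Y : EV n m → EV n m) (a : ℝ) (hY : Differentiable ℝ Y) :
    vbracket X (a • Y) = a • vbracket X Y := by
  funext p
  have h1 : fderiv ℝ (a • Y) p = a • fderiv ℝ Y p := fderiv_const_smul (hY p) a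
  simp only [vbracket, Pi.smul_apply, h1, ContinuousLinearMap.smul_apply, map_smul, smul_sub]

lemma vbracket_add_left (X Z Y : EV n m → EV n m)
    (hX : Differentiable ℝ X) (hZ : Differentiable ℝ Z) :
    vbracket (X + Z) Y = vbracket X Y + vbracket Z Y := by
  rw [vbracket_antisymm, vbracket_add_right Y X Z hX hZ,
    vbracket_antisymm Y X, vbracket_antisymm Y Z]
  funext p
  simp
  abel

lemma vbracket_smul_left (X Y : EV n m → EV n m) (a : ℝ) (hX : Differentiable ℝ X) :
    vbracket (a • X) Y = a • vbracket X Y := by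
  rw [vbracket_antisymm, vbracket_smul_right Y X a hX, vbracket_antisymm Y X]
  funext p
  simp

/-! ### Differentiability of span elements -/

lemma diff_of_mem {X : EV n m → EV n m} (h : X ∈ SP n m κ) : Differentiable ℝ X := by
  induction h using Submodule.span_induction with
  | mem V hV =>
    rcases hV with ((((⟨k, rfl⟩ | ⟨k₁, k₂, rfl⟩) | ⟨k₁, rfl⟩) | ⟨i₁, i₂, rfl⟩) | ⟨i, β, hβ, rfl⟩)
    · exact diff_genA k
    · exact diff_genB k₁ k₂
    · exact diff_genC κ k₁
    · exact diff_genD i₁ i₂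
    · exact diff_genE i β
  | zero => exact differentiable_const (0 : EV n m)
  | add X Y _ _ hX hY => exact hX.add hY
  | smul a X _ hX => exact hX.const_smul a

/-! ### Brackets of generators lie in the span -/

lemma base (hκ : 3 ≤ κ) (V W : EV n m → EV n m)
    (hV : V ∈ genSet n m κ) (hW : W ∈ genSet n m κ) :
    vbracket V W ∈ SP n m κ := by
  rcases hV with ((((⟨k, rfl⟩ | ⟨a, b, rfl⟩) | ⟨a, rfl⟩) | ⟨a, b, rfl⟩) | ⟨i, β, hβ, rfl⟩) <;>
    rcases hW with ((((⟨k', rfl⟩ | ⟨c, d, rfl⟩) | ⟨c, rfl⟩) | ⟨c, d, rfl⟩) | ⟨i', β', hβ', rfl⟩)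
  -- A-*
  · show vbracket (genA k : EV n m → EV n m) (genA k') ∈ SP n m κ
    rw [brAA k k']
    exact zero_mem _
  · show vbracket (genA k : EV n m → EV n m) (genB c d) ∈ SP n m κ
    rw [brAB k c d]
    exact Submodule.smul_mem _ _ (memA d)
  · show vbracket (genA k : EV n m → EV n m) (genC κ c) ∈ SP n m κ
    rw [brAC k c]
    exact add_mem (memB c k) (Submodule.smul_mem _ _ memR)
  · show vbracket (genA k : EV n m → EV n m) (genD c d) ∈ SP n m κ
    rw [brAD k c d]
    exact zero_mem _
  · show vbracket (genA k : EV n m → EV n m) (genE i' β') ∈ SP n m κ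
    rw [brAE k i' β']
    refine Submodule.smul_mem _ _ (memE i' _ ?_)
    refine le_trans (Finset.sum_le_sum fun l _ => ?_) hβ'
    rcases eq_or_ne l k with rfl | h
    · rw [Function.update_self]; omega
    · rw [Function.update_of_ne h]
  -- B-*
  · show vbracket (genB a b : EV n m → EV n m) (genA k') ∈ SP n m κ
    rw [vbracket_antisymm, brAB k' a b]
    exact neg_mem (Submodule.smul_mem _ _ (memA b))
  · show vbracket (genB a b : EV n m → EV n m) (genB c d) ∈ SP n m κ
    rw [brBB a b c d]
    exact sub_mem (Submodule.smul_mem _ _ (memB a d)) (Submodule.smul_mem _ _ (memB c b))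
  · show vbracket (genB a b : EV n m → EV n m) (genC κ c) ∈ SP n m κ
    rw [brBC a b c]
    exact Submodule.smul_mem _ _ (memC a)
  · show vbracket (genB a b : EV n m → EV n m) (genD c d) ∈ SP n m κ
    rw [brBD a b c d]
    exact zero_mem _
  · show vbracket (genB a b : EV n m → EV n m) (genE i' β') ∈ SP n m κ
    exact brBE_mem a b i' β' hβ'
  -- C-*
  · show vbracket (genC κ a : EV n m → EV n m) (genA k') ∈ SP n m κ
    rw [vbracket_antisymm, brAC k' a]
    exact neg_mem (add_mem (memB a k') (Submodule.smul_mem _ _ memR))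
  · show vbracket (genC κ a : EV n m → EV n m) (genB c d) ∈ SP n m κ
    rw [vbracket_antisymm, brBC c d a]
    exact neg_mem (Submodule.smul_mem _ _ (memC c))
  · show vbracket (genC κ a : EV n m → EV n m) (genC κ c) ∈ SP n m κ
    rw [brCC a c]
    exact zero_mem _
  · show vbracket (genC κ a : EV n m → EV n m) (genD c d) ∈ SP n m κ
    rw [brCD a c d]
    exact zero_mem _
  · show vbracket (genC κ a : EV n m → EV n m) (genE i' β') ∈ SP n m κ
    exact brCE_mem hκ a i' β' hβ'
  -- D-*
  · show vbracket (genD a b : EV n m → EV n m) (genA k') ∈ SP n m κ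
    rw [vbracket_antisymm, brAD k' a b]
    simp only [neg_zero]
    exact zero_mem _
  · show vbracket (genD a b : EV n m → EV n m) (genB c d) ∈ SP n m κ
    rw [vbracket_antisymm, brBD c d a b]
    simp only [neg_zero]
    exact zero_mem _
  · show vbracket (genD a b : EV n m → EV n m) (genC κ c) ∈ SP n m κ
    rw [vbracket_antisymm, brCD c a b]
    simp only [neg_zero]
    exact zero_mem _
  · show vbracket (genD a b : EV n m → EV n m) (genD c d) ∈ SP n m κ
    rw [brDD a b c d]
    exact sub_mem (Submodule.smul_mem _ _ (memD a d)) (Submodule.smul_mem _ _ (memD c b))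
  · show vbracket (genD a b : EV n m → EV n m) (genE i' β') ∈ SP n m κ
    rw [brDE a b i' β']
    exact neg_mem (Submodule.smul_mem _ _ (memE b β' hβ'))
  -- E-*
  · show vbracket (genE i β : EV n m → EV n m) (genA k') ∈ SP n m κ
    rw [vbracket_antisymm, brAE k' i β]
    refine neg_mem (Submodule.smul_mem _ _ (memE i _ ?_))
    refine le_trans (Finset.sum_le_sum fun l _ => ?_) hβ
    rcases eq_or_ne l k' with rfl | h
    · rw [Function.update_self]; omega
    · rw [Function.update_of_ne h]
  · show vbracket (genE i β : EV n m → EV n m) (genB c d) ∈ SP n m κ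
    rw [vbracket_antisymm]
    exact neg_mem (brBE_mem c d i β hβ)
  · show vbracket (genE i β : EV n m → EV n m) (genC κ c) ∈ SP n m κ
    rw [vbracket_antisymm]
    exact neg_mem (brCE_mem hκ c i β hβ)
  · show vbracket (genE i β : EV n m → EV n m) (genD c d) ∈ SP n m κ
    rw [vbracket_antisymm, brDE c d i β]
    exact neg_mem (neg_mem (Submodule.smul_mem _ _ (memE d β hβ)))
  · show vbracket (genE i β : EV n m → EV n m) (genE i' β') ∈ SP n m κ
    rw [brEE i i' β β']
    exact zero_mem _

end Aux

/-- the span of the vector fields (e48) is closed under the Lie bracket. -/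
theorem stmt10 (n m κ : ℕ) (hn : 1 ≤ n) (hm : 1 ≤ m) (hκ : 3 ≤ κ) :
    ∀ X Y : (Fin n → ℝ) × (Fin m → ℝ) → (Fin n → ℝ) × (Fin m → ℝ),
      X ∈ Submodule.span ℝ (genSet n m κ) → Y ∈ Submodule.span ℝ (genSet n m κ) →
      vbracket X Y ∈ Submodule.span ℝ (genSet n m κ) := by
  intro X Y hX hY
  have main : ∀ X, X ∈ SP n m κ → ∀ Y, Y ∈ SP n m κ → vbracket X Y ∈ SP n m κ := by
    intro X hX
    induction hX using Submodule.span_induction with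
    | mem V hV =>
      intro Y hY
      induction hY using Submodule.span_induction with
      | mem W hW => exact base hκ V W hV hW
      | zero => rw [vbracket_zero_right]; exact zero_mem _
      | add Y Z hYm hZm ihY ihZ =>
        rw [vbracket_add_right V Y Z (diff_of_mem hYm) (diff_of_mem hZm)]
        exact add_mem ihY ihZ
      | smul a Y hYm ihY =>
        rw [vbracket_smul_right V Y a (diff_of_mem hYm)]
        exact Submodule.smul_mem _ _ ihY
    | zero => intro Y hY; rw [vbracket_zero_left]; exact zero_mem _
    | add X Z hXm hZm ihX ihZ =>
      intro Y hY
      rw [vbracket_add_left X Z Y (diff_of_mem hXm) (diff_of_mem hZm)]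
      exact add_mem (ihX Y hY) (ihZ Y hY)
    | smul a X hXm ihX =>
      intro Y hY
      rw [vbracket_smul_left X Y a (diff_of_mem hXm)]
      exact Submodule.smul_mem _ _ (ihX Y hY)
  exact main X hX Y hY
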